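/- Let T be a tree of order at least 3 with maximum degree t, and let 𝒢 be an Abelian group of odd order k ≥ max{7, t+2}. Then there exists a 𝒢-twin edge coloring of T, unless T is a (3^p − 2)-regular tree and 𝒢 ≅ (ℤ_3)^p for some integer p. -/

import Mathlib

open Finset SimpleGraph

/-- A `𝒢`-twin edge coloring of `G`: a proper edge labeling `f : E(G) → 𝒢` such that
the induced weighted degrees `w(v) = ∑_{u ∈ N(v)} f(uv)` differ on adjacent vertices. -/
def IsTwinEdgeColoring {V : Type} [Fintype V] (G : SimpleGraph V) [DecidableRel G.Adj]
    {A : Type} [AddCommGroup A] (f : Sym2 V → A) : Prop :=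
  (∀ u v w : V, G.Adj u v → G.Adj u w → v ≠ w → f s(u, v) ≠ f s(u, w)) ∧
  (∀ u v : V, G.Adj u v →
    ∑ x ∈ G.neighborFinset u, f s(x, u) ≠ ∑ x ∈ G.neighborFinset v, f s(x, v))


/-- A tree is `r`-regular if every non-leaf vertex has degree `r`. -/
def IsRegularTreeDeg {V : Type} [Fintype V] (G : SimpleGraph V) [DecidableRel G.Adj]
    (r : ℕ) : Prop :=
  ∀ v : V, G.degree v ≠ 1 → G.degree v = r


set_option linter.unusedSectionVars false
set_option maxHeartbeats 1600000

namespace TwinAux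


section Group
variable {A : Type} [AddCommGroup A] [Fintype A] [DecidableEq A]

def Elem3 (A : Type) [AddCommGroup A] : Prop := ∀ a : A, a + a + a = 0

lemma eq_zero_of_two_nsmul_eq_zero (hodd : Odd (Fintype.card A)) {a : A}
    (h : a + a = 0) : a = 0 := by
  have h2 : 2 • a = 0 := by rw [two_nsmul]; exact h
  have hd : addOrderOf a ∣ 2 := addOrderOf_dvd_of_nsmul_eq_zero h2
  have hc : addOrderOf a ∣ Fintype.card A := addOrderOf_dvd_card
  have hgcd : addOrderOf a ∣ Nat.gcd 2 (Fintype.card A) := Nat.dvd_gcd hd hc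
  have hg : Nat.gcd 2 (Fintype.card A) = 1 := by
    rcases hodd with ⟨m, hm⟩
    have h2' : Nat.gcd 2 (Fintype.card A) ∣ 2 := Nat.gcd_dvd_left _ _
    have h3' : Nat.gcd 2 (Fintype.card A) ∣ Fintype.card A := Nat.gcd_dvd_right _ _
    rcases (Nat.dvd_prime Nat.prime_two).mp h2' with h | h
    · exact h
    · exfalso; rw [h] at h3'; omega
  rw [hg, Nat.dvd_one] at hgcd
  exact AddMonoid.addOrderOf_eq_one_iff.mp hgcd

lemma sum_univ_eq_zero (hodd : Odd (Fintype.card A)) : (∑ a : A, a) = 0 := by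
  have h : (∑ a : A, a) = ∑ a : A, -a := (Fintype.sum_equiv (Equiv.neg A) _ _ (fun a => rfl)).symm
  have h2 : (∑ a : A, a) + (∑ a : A, a) = 0 := by
    nth_rewrite 2 [h]
    rw [← Finset.sum_add_distrib]
    simp
  exact eq_zero_of_two_nsmul_eq_zero hodd h2





def tor3 (A : Type) [AddCommGroup A] : AddSubgroup A where
  carrier := {a | a + a + a = 0}
  add_mem' := by
    intro a b ha hb; simp only [Set.mem_setOf_eq] at *
    calc a + b + (a + b) + (a + b) = (a + a + a) + (b + b + b) := by abel
    _ = 0 := by rw [ha, hb, add_zero]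
  zero_mem' := by simp
  neg_mem' := by
    intro a ha; simp only [Set.mem_setOf_eq] at *
    calc -a + -a + -a = -(a + a + a) := by abel
    _ = 0 := by rw [ha, neg_zero]

lemma card_three_torsion_le (hodd : Odd (Fintype.card A)) (hne : ¬ Elem3 A) :
    3 * #(univ.filter (fun a : A => a + a + a = 0)) ≤ Fintype.card A := by
  classical
  set n := #(univ.filter (fun a : A => a + a + a = 0)) with hn
  have hset : Nat.card (tor3 A) = n := by
    rw [hn]
    rw [show Nat.card (tor3 A) = Nat.card {a : A // a + a + a = 0} from
      Nat.card_congr (Equiv.subtypeEquivRight (fun a => Iff.rfl))]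
    rw [Nat.card_eq_fintype_card, Fintype.card_subtype]
  have hdvd : n ∣ Fintype.card A := by
    rw [← hset, ← Nat.card_eq_fintype_card]
    exact AddSubgroup.card_addSubgroup_dvd_card _
  have hlt : n < Fintype.card A := by
    rw [← Finset.card_univ]
    apply Finset.card_lt_card
    rw [Finset.ssubset_iff_of_subset (filter_subset _ _)]
    rcases not_forall.mp hne with ⟨a, ha⟩
    exact ⟨a, mem_univ a, by simp [ha]⟩
  have hpos : 0 < n := by
    apply Finset.card_pos.mpr
    exact ⟨0, by simp⟩
  obtain ⟨m, hm⟩ := hdvd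
  have hmodd : Odd m := by
    rcases Nat.even_or_odd m with he | ho
    · exfalso; rcases he with ⟨j, hj⟩; rcases hodd with ⟨i, hi⟩
      have h2 : Fintype.card A = 2*(n*j) := by rw [hm, hj]; ring
      omega
    · exact ho
  have hm3 : 3 ≤ m := by
    rcases hmodd with ⟨j, hj⟩
    have : 1 < m := by
      rcases Nat.lt_or_ge m 2 with h | h
      · interval_cases m <;> omega
      · omega
    omega
  calc 3 * n ≤ m * n := Nat.mul_le_mul_right n hm3
  _ = Fintype.card A := by rw [hm]; ring

lemma elem3_struct (h3 : Elem3 A) :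
    ∃ p : ℕ, Fintype.card A = 3 ^ p ∧ Nonempty (A ≃+ (Fin p → ZMod 3)) := by
  have hsmul : ∀ a : A, (3 : ℕ) • a = 0 := by
    intro a; have := h3 a
    rw [show (3:ℕ) • a = a + a + a by rw [succ_nsmul, two_nsmul]]; exact this
  letI : Module (ZMod 3) A := AddCommGroup.zmodModule hsmul
  letI : Module.Finite (ZMod 3) A := Module.Finite.of_finite
  refine ⟨Module.finrank (ZMod 3) A, ?_, ?_⟩
  · have := Module.card_eq_pow_finrank (K := ZMod 3) (V := A)
    simpa [ZMod.card] using this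
  · exact ⟨((Module.finBasis (ZMod 3) A).equivFun).toAddEquiv⟩






lemma card_three_torsion_le' (hodd : Odd (Fintype.card A)) (hne : ¬ ∀ a : A, a + a + a = 0) :
    3 * #(univ.filter (fun a : A => a + a + a = 0)) ≤ Fintype.card A :=
  card_three_torsion_le hodd hne

variable (c0 : A)

/-- The pool of available colors. -/
def pool (c0 : A) : Finset A := univ \ {0, c0}

lemma mem_pool {a : A} : a ∈ pool c0 ↔ a ≠ 0 ∧ a ≠ c0 := by
  simp [pool, not_or]

lemma card_pool (hc0 : c0 ≠ 0) : #(pool c0) = Fintype.card A - 2 := by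
  rw [pool, card_sdiff_of_subset (subset_univ _), card_univ, card_pair (Ne.symm hc0)]

lemma sum_pool (hodd : Odd (Fintype.card A)) (hc0 : c0 ≠ 0) :
    ∑ x ∈ pool c0, x = -c0 := by
  rw [pool, sum_sdiff_eq_sub (subset_univ _), sum_univ_eq_zero hodd,
    sum_pair (Ne.symm hc0)]
  abel

lemma exists_not_mem_finset (E : Finset A) (h : #E < Fintype.card A) : ∃ x : A, x ∉ E := by
  by_contra hc
  push_neg at hc
  have : (univ : Finset A) ⊆ E := fun x _ => hc x
  have := card_le_card this
  rw [card_univ] at this; omega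

lemma card_sol_le_one (hodd : Odd (Fintype.card A)) (b : A) :
    #(univ.filter fun x : A => x + x = b) ≤ 1 := by
  apply card_le_one.mpr
  intro x hx y hy
  simp only [mem_filter] at hx hy
  have : (x - y) + (x - y) = 0 := by
    have h2 := hx.2.trans hy.2.symm
    calc (x - y) + (x - y) = (x + x) - (y + y) := by abel
    _ = 0 := by rw [h2, sub_self]
  have := eq_zero_of_two_nsmul_eq_zero hodd this
  exact sub_eq_zero.mp this

lemma my_neg_ne_self (hodd : Odd (Fintype.card A)) {a : A} (ha : a ≠ 0) : -a ≠ a := by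
  intro h
  apply ha
  apply eq_zero_of_two_nsmul_eq_zero hodd
  calc a + a = a - (-a) := by abel
  _ = a - a := by rw [h]
  _ = 0 := sub_self a

/-- extend a subset by a `{x, -x}` pair -/
lemma pairstep (hodd : Odd (Fintype.card A)) (hc0 : c0 ≠ 0) (B : Finset A)
    (hB : B ⊆ pool c0) (hcard : 2 * #B + 4 ≤ Fintype.card A) :
    ∃ B' ⊆ pool c0, #B' = #B + 2 ∧ ∑ x ∈ B', x = ∑ x ∈ B, x := by
  obtain ⟨x, hx⟩ := exists_not_mem_finset (B ∪ B.image (fun b => -b) ∪ {0, c0, -c0})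
    (by
      have h1 : #(B ∪ B.image (fun b => -b) ∪ {0, c0, -c0}) ≤ #B + #B + 3 := by
        calc #(B ∪ B.image (fun b => -b) ∪ {0, c0, -c0})
            ≤ #(B ∪ B.image (fun b => -b)) + #({0, c0, -c0} : Finset A) := card_union_le _ _
          _ ≤ (#B + #(B.image (fun b => -b))) + 3 := by
              gcongr
              · exact card_union_le _ _
              · exact (card_insert_le _ _).trans (by
                  have := card_insert_le (c0 : A) ({-c0} : Finset A)
                  simp only [card_singleton] at this
                  omega)
          _ ≤ #B + #B + 3 := by
              have := card_image_le (s := B) (f := fun b : A => -b)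
              omega
      omega)
  simp only [mem_union, mem_insert, mem_singleton, not_or, mem_image, not_exists] at hx
  obtain ⟨⟨hxB, hxnB⟩, hx0, hxc0, hxnc0⟩ := hx
  have hnegB : -x ∉ B := fun h => hxnB (-x) ⟨h, by abel⟩
  have hxne : x ≠ -x := fun h => hx0 (eq_zero_of_two_nsmul_eq_zero hodd (by
    calc x + x = x - (-x) := by abel
    _ = x - x := by rw [← h]
    _ = 0 := sub_self x))
  refine ⟨insert x (insert (-x) B), ?_, ?_, ?_⟩
  · intro y hy
    simp only [mem_insert] at hy
    rcases hy with rfl | rfl | hy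
    · exact (mem_pool c0).mpr ⟨hx0, hxc0⟩
    · exact (mem_pool c0).mpr ⟨by simpa using hx0, by intro h; apply hxnc0; rw [← h]; abel⟩
    · exact hB hy
  · rw [card_insert_of_notMem (by simp [hxne, hxB]), card_insert_of_notMem hnegB]
  · rw [sum_insert (by simp [hxne, hxB]), sum_insert hnegB]
    abel

/-- small subsets of the pool with sum `-c0` -/
lemma W1 (hodd : Odd (Fintype.card A)) (h7 : 7 ≤ Fintype.card A) (hc0 : c0 ≠ 0) :
    ∀ j, 1 ≤ j → 2 * j + 1 ≤ Fintype.card A →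
    ∃ B ⊆ pool c0, #B = j ∧ ∑ x ∈ B, x = -c0 := by
  intro j
  induction j using Nat.strong_induction_on with
  | _ j ih =>
    intro hj1 hjk
    match j, hj1 with
    | 1, _ =>
      refine ⟨{-c0}, ?_, by simp, by simp⟩
      intro y hy
      simp only [mem_singleton] at hy
      subst hy
      exact (mem_pool c0).mpr ⟨by simpa using hc0, my_neg_ne_self hodd hc0⟩
    | 2, _ =>
      obtain ⟨x, hx⟩ := exists_not_mem_finset
        (({0, c0, -c0, -c0-c0} : Finset A) ∪ univ.filter (fun x : A => x + x = -c0))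
        (by
          have h1 := card_sol_le_one hodd (-c0 : A)
          have h2 : #({0, c0, -c0, -c0-c0} : Finset A) ≤ 4 := by
            apply (card_insert_le _ _).trans
            have := card_insert_le (c0:A) ({-c0, -c0-c0} : Finset A)
            have := card_insert_le (-c0:A) ({-c0-c0} : Finset A)
            simp only [card_singleton] at *
            omega
          have := card_union_le ({0, c0, -c0, -c0-c0} : Finset A)
            (univ.filter (fun x : A => x + x = -c0))
          omega)
      simp only [mem_union, mem_insert, mem_singleton, mem_filter, mem_univ, true_and,
        not_or] at hx
      obtain ⟨⟨hx0, hxc0, hxnc0, hxcc⟩, hxsol⟩ := hx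
      have hy0 : -c0 - x ≠ 0 := by
        intro h; apply hxnc0
        rw [← sub_eq_zero, show x - (-c0) = -((-c0 - x) - 0) by abel, h, sub_self, neg_zero]
      have hyc0 : -c0 - x ≠ c0 := by
        intro h; apply hxcc
        rw [← sub_eq_zero, show x - (-c0 - c0) = -((-c0 - x) - c0) by abel, h, sub_self, neg_zero]
      have hyx : -c0 - x ≠ x := by
        intro h; apply hxsol
        rw [← sub_eq_zero, show x + x - (-c0) = -((-c0 - x) - x) by abel, h, sub_self, neg_zero]
      refine ⟨{x, -c0 - x}, ?_, ?_, ?_⟩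
      · intro y hy
        simp only [mem_insert, mem_singleton] at hy
        rcases hy with rfl | rfl
        · exact (mem_pool c0).mpr ⟨hx0, hxc0⟩
        · exact (mem_pool c0).mpr ⟨hy0, hyc0⟩
      · rw [card_pair (Ne.symm hyx)]
      · rw [sum_pair (Ne.symm hyx)]; abel
    | (n+3), _ =>
      obtain ⟨B, hB, hBcard, hBsum⟩ := ih (n+1) (by omega) (by omega) (by omega)
      obtain ⟨B', hB', hB'card, hB'sum⟩ := pairstep c0 hodd hc0 B hB (by omega)
      exact ⟨B', hB', by omega, by rw [hB'sum, hBsum]⟩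

/-- small subsets of the pool with sum `0` -/
lemma W0 (hodd : Odd (Fintype.card A)) (h7 : 7 ≤ Fintype.card A) (hc0 : c0 ≠ 0) :
    ∀ i, 2 ≤ i → 2 * i + 5 ≤ Fintype.card A →
    ∃ B ⊆ pool c0, #B = i ∧ ∑ x ∈ B, x = 0 := by
  intro i
  induction i using Nat.strong_induction_on with
  | _ i ih =>
    intro hi2 hik
    match i, hi2 with
    | 2, _ =>
      obtain ⟨B', hB', hcard, hsum⟩ := pairstep c0 hodd hc0 ∅ (by simp) (by simp; omega)
      exact ⟨B', hB', by simpa using hcard, by simpa using hsum⟩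
    | 3, _ =>
      obtain ⟨a, ha⟩ := exists_not_mem_finset ({0, c0} : Finset A)
        (by
          have := card_insert_le (0:A) ({c0} : Finset A)
          simp only [card_singleton] at this
          omega)
      simp only [mem_insert, mem_singleton, not_or] at ha
      obtain ⟨ha0, hac0⟩ := ha
      obtain ⟨b, hb⟩ := exists_not_mem_finset
        (({0, c0, a, -a, -a-c0, -a-a} : Finset A) ∪ univ.filter (fun x : A => x + x = -a))
        (by
          have h1 := card_sol_le_one hodd (-a : A)
          have h2 : #({0, c0, a, -a, -a-c0, -a-a} : Finset A) ≤ 6 := by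
            apply (card_insert_le _ _).trans
            have h3 : #({c0, a, -a, -a-c0, -a-a} : Finset A) ≤ 5 := by
              apply (card_insert_le _ _).trans
              have h4 : #({a, -a, -a-c0, -a-a} : Finset A) ≤ 4 := by
                apply (card_insert_le _ _).trans
                have h5 : #({-a, -a-c0, -a-a} : Finset A) ≤ 3 := by
                  apply (card_insert_le _ _).trans
                  have := card_insert_le (-a-c0:A) ({-a-a} : Finset A)
                  simp only [card_singleton] at this
                  omega
                omega
              omega
            omega
          have := card_union_le ({0, c0, a, -a, -a-c0, -a-a} : Finset A)
            (univ.filter (fun x : A => x + x = -a))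
          omega)
      simp only [mem_union, mem_insert, mem_singleton, mem_filter, mem_univ, true_and,
        not_or] at hb
      obtain ⟨⟨hb0, hbc0, hba, hbna, hbnac, hbnaa⟩, hbsol⟩ := hb
      have hz0 : -a - b ≠ 0 := by
        intro h; apply hbna
        rw [← sub_eq_zero, show b - (-a) = -((-a - b) - 0) by abel, h, sub_self, neg_zero]
      have hzc0 : -a - b ≠ c0 := by
        intro h; apply hbnac
        rw [← sub_eq_zero, show b - (-a - c0) = -((-a - b) - c0) by abel, h, sub_self, neg_zero]
      have hza : -a - b ≠ a := by
        intro h; apply hbnaa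
        rw [← sub_eq_zero, show b - (-a - a) = -((-a - b) - a) by abel, h, sub_self, neg_zero]
      have hzb : -a - b ≠ b := by
        intro h; apply hbsol
        rw [← sub_eq_zero, show b + b - (-a) = -((-a - b) - b) by abel, h, sub_self, neg_zero]
      have hab : a ≠ b := fun h => hba h.symm
      refine ⟨{a, b, -a - b}, ?_, ?_, ?_⟩
      · intro y hy
        simp only [mem_insert, mem_singleton] at hy
        rcases hy with rfl | rfl | rfl
        · exact (mem_pool c0).mpr ⟨ha0, hac0⟩
        · exact (mem_pool c0).mpr ⟨hb0, hbc0⟩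
        · exact (mem_pool c0).mpr ⟨hz0, hzc0⟩
      · rw [card_insert_of_notMem (by simp [hab, Ne.symm hza]), card_pair (Ne.symm hzb)]
      · rw [sum_insert (by simp [hab, Ne.symm hza]), sum_pair (Ne.symm hzb)]; abel
    | (n+4), _ =>
      obtain ⟨B, hB, hBcard, hBsum⟩ := ih (n+2) (by omega) (by omega) (by omega)
      obtain ⟨B', hB', hB'card, hB'sum⟩ := pairstep c0 hodd hc0 B hB (by omega)
      exact ⟨B', hB', by omega, by rw [hB'sum, hBsum]⟩

/-- complementation -/
lemma compl_trick (hodd : Odd (Fintype.card A)) (hc0 : c0 ≠ 0) (B : Finset A)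
    (hB : B ⊆ pool c0) :
    (pool c0 \ B) ⊆ pool c0 ∧ #(pool c0 \ B) = (Fintype.card A - 2) - #B ∧
      ∑ x ∈ pool c0 \ B, x = -c0 - ∑ x ∈ B, x := by
  refine ⟨sdiff_subset, ?_, ?_⟩
  · rw [card_sdiff_of_subset hB, card_pool c0 hc0]
  · rw [sum_sdiff_eq_sub hB, sum_pool c0 hodd hc0]

lemma F1 (hodd : Odd (Fintype.card A)) (h7 : 7 ≤ Fintype.card A) (hc0 : c0 ≠ 0)
    (j : ℕ) (hj1 : 1 ≤ j) (hj2 : j + 4 ≤ Fintype.card A) :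
    ∃ B ⊆ pool c0, #B = j ∧ ∑ x ∈ B, x = -c0 := by
  rcases le_or_gt (2*j+1) (Fintype.card A) with h | h
  · exact W1 c0 hodd h7 hc0 j hj1 h
  · have h2j : Fintype.card A + 1 ≤ 2 * j := by
      rcases hodd with ⟨m, hm⟩; omega
    obtain ⟨B, hB, hBcard, hBsum⟩ := W0 c0 hodd h7 hc0 (Fintype.card A - 2 - j)
      (by omega) (by omega)
    obtain ⟨h1, h2, h3⟩ := compl_trick c0 hodd hc0 B hB
    refine ⟨pool c0 \ B, h1, by omega, by rw [h3, hBsum]; abel⟩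

lemma Zlem (hodd : Odd (Fintype.card A)) (h7 : 7 ≤ Fintype.card A) (hc0 : c0 ≠ 0)
    (m : ℕ) (hm1 : 2 ≤ m) (hm2 : m + 3 ≤ Fintype.card A) :
    ∃ B ⊆ pool c0, #B = m ∧ ∑ x ∈ B, x = 0 := by
  obtain ⟨B, hB, hBcard, hBsum⟩ := F1 c0 hodd h7 hc0 (Fintype.card A - 2 - m)
    (by omega) (by omega)
  obtain ⟨h1, h2, h3⟩ := compl_trick c0 hodd hc0 B hB
  refine ⟨pool c0 \ B, h1, by omega, by rw [h3, hBsum]; abel⟩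


lemma build_sigma {i : Type} [DecidableEq i] (C : Finset i) (B : Finset A) (h : #C = #B) :
    ∃ σ : i → A, Set.InjOn σ C ∧ (∀ u ∈ C, σ u ∈ B) ∧ ∑ u ∈ C, σ u = ∑ b ∈ B, b := by
  have e := Finset.equivOfCardEq h
  classical
  let σ : i → A := fun u => if hu : u ∈ C then (e ⟨u, hu⟩ : A) else 0
  have hσ : ∀ u (hu : u ∈ C), σ u = (e ⟨u, hu⟩ : A) := fun u hu => dif_pos hu
  refine ⟨σ, ?_, ?_, ?_⟩
  · intro u hu v hv huv
    simp only [Finset.mem_coe] at hu hv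
    rw [hσ u hu, hσ v hv] at huv
    have := e.injective (Subtype.ext huv)
    exact congrArg Subtype.val this
  · intro u hu
    rw [hσ u hu]
    exact (e ⟨u, hu⟩).2
  · apply Finset.sum_bij (fun u (hu : u ∈ C) => σ u)
    · intro u hu; rw [hσ u hu]; exact (e ⟨u, hu⟩).2
    · intro u hu v hv huv
      rw [hσ u hu, hσ v hv] at huv
      exact congrArg Subtype.val (e.injective (Subtype.ext huv))
    · intro b hb
      refine ⟨(e.symm ⟨b, hb⟩ : i), (e.symm ⟨b, hb⟩).2, ?_⟩
      rw [hσ _ (e.symm ⟨b, hb⟩).2]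
      simp
    · intro u hu; rfl

lemma build_sigma' {i : Type} [DecidableEq i] (C : Finset i) (B : Finset A) (h : #C = #B)
    (u₀ : i) (hu₀ : u₀ ∈ C) (b₀ : A) (hb₀ : b₀ ∈ B) :
    ∃ σ : i → A, Set.InjOn σ C ∧ (∀ u ∈ C, σ u ∈ B) ∧ (∑ u ∈ C, σ u = ∑ b ∈ B, b) ∧
      σ u₀ = b₀ ∧ (∀ u ∈ C, u ≠ u₀ → σ u ≠ b₀) := by
  obtain ⟨σ₀, hinj, hmem, hsum⟩ := build_sigma (C.erase u₀) (B.erase b₀)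
    (by rw [card_erase_of_mem hu₀, card_erase_of_mem hb₀, h])
  classical
  let σ : i → A := fun u => if u = u₀ then b₀ else σ₀ u
  have hσ1 : σ u₀ = b₀ := if_pos rfl
  have hσ2 : ∀ u, u ≠ u₀ → σ u = σ₀ u := fun u h => if_neg h
  refine ⟨σ, ?_, ?_, ?_, hσ1, ?_⟩
  · intro u hu v hv huv
    simp only [Finset.mem_coe] at hu hv
    by_cases h1 : u = u₀ <;> by_cases h2 : v = u₀
    · rw [h1, h2]
    · subst h1; rw [hσ1, hσ2 v h2] at huv
      exfalso
      have := hmem v (mem_erase.mpr ⟨h2, hv⟩)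
      rw [← huv] at this
      exact (mem_erase.mp this).1 rfl
    · subst h2; rw [hσ1, hσ2 u h1] at huv
      exfalso
      have := hmem u (mem_erase.mpr ⟨h1, hu⟩)
      rw [huv] at this
      exact (mem_erase.mp this).1 rfl
    · rw [hσ2 u h1, hσ2 v h2] at huv
      exact hinj (mem_erase.mpr ⟨h1, hu⟩) (mem_erase.mpr ⟨h2, hv⟩) huv
  · intro u hu
    by_cases h1 : u = u₀
    · subst h1; rw [hσ1]; exact hb₀
    · rw [hσ2 u h1]
      exact (erase_subset _ _) (hmem u (mem_erase.mpr ⟨h1, hu⟩))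
  · rw [← Finset.add_sum_erase C _ hu₀, ← Finset.add_sum_erase B _ hb₀, hσ1]
    congr 1
    rw [Finset.sum_congr rfl (fun u hu => hσ2 u (mem_erase.mp hu).1)]
    exact hsum
  · intro u hu hne
    rw [hσ2 u hne]
    intro h'
    have := hmem u (mem_erase.mpr ⟨hne, hu⟩)
    rw [h'] at this
    exact (mem_erase.mp this).1 rfl

set_option maxHeartbeats 1000000 in
lemma sel {i : Type} [DecidableEq i] (hodd : Odd (Fintype.card A)) (h7 : 7 ≤ Fintype.card A)
    (C : Finset i) (Lf Fx : i → Prop) (c0 b0 : A) (hc0 : c0 ≠ 0)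
    (hm1 : 1 ≤ #C) (hm2 : #C + 3 ≤ Fintype.card A)
    (hviol : b0 = c0 → #C + 3 = Fintype.card A →
      (∃ u ∈ C, ¬Lf u ∧ Fx u) ∨ ((∀ u ∈ C, Lf u) ∧ ¬∀ a : A, a + a + a = 0)) :
    ∃ σ : i → A, Set.InjOn σ C ∧ (∀ u ∈ C, σ u ≠ c0) ∧ (∀ u ∈ C, ¬Lf u → σ u ≠ 0) ∧
      (c0 + ∑ u ∈ C, σ u ≠ b0) ∧
      (∀ u ∈ C, σ u = c0 + ∑ x ∈ C, σ x → (¬Lf u ∧ Fx u)) := by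
  rcases Nat.lt_or_ge (#C) 2 with hm | hm
  · -- m = 1
    have h1 : #C = 1 := by omega
    obtain ⟨u, hu⟩ := card_eq_one.mp h1
    subst hu
    obtain ⟨a, ha⟩ := exists_not_mem_finset ({0, c0, b0 - c0} : Finset A)
      (by
        have h2 := card_insert_le (0:A) ({c0, b0 - c0} : Finset A)
        have h3 := card_insert_le (c0:A) ({b0 - c0} : Finset A)
        simp only [card_singleton] at *
        omega)
    simp only [mem_insert, mem_singleton, not_or] at ha
    obtain ⟨ha0, hac0, hab⟩ := ha
    refine ⟨fun _ => a, ?_, ?_, ?_, ?_, ?_⟩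
    · intro x hx y hy _; simp only [coe_singleton, Set.mem_singleton_iff] at hx hy; rw [hx, hy]
    · intro x hx; simp only [mem_singleton] at hx; exact fun h => hac0 h
    · intro x hx _; exact ha0
    · rw [sum_singleton]
      intro h; exact hab (by rw [← h]; abel)
    · intro x hx h
      rw [sum_singleton] at h
      exfalso
      apply hc0
      have : c0 + a - a = 0 := by rw [← h]; abel
      rw [show c0 + a - a = c0 by abel] at this
      exact this
  · -- m ≥ 2
    by_cases hb : b0 = c0
    · rcases Nat.lt_or_ge (#C + 3) (Fintype.card A) with hk | hk
      · -- violated, m ≤ k - 4 : use sum -c0, W = 0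
        obtain ⟨B, hB, hBcard, hBsum⟩ := F1 c0 hodd h7 hc0 (#C) (by omega) (by omega)
        obtain ⟨σ, hinj, hmem, hsum⟩ := build_sigma C B hBcard.symm
        have hW : c0 + ∑ u ∈ C, σ u = 0 := by rw [hsum, hBsum]; abel
        refine ⟨σ, hinj, ?_, ?_, ?_, ?_⟩
        · intro u hu; exact ((mem_pool c0).mp (hB (hmem u hu))).2
        · intro u hu _; exact ((mem_pool c0).mp (hB (hmem u hu))).1
        · rw [hW, hb]; exact Ne.symm hc0
        · intro u hu h
          rw [hW] at h
          exact absurd h ((mem_pool c0).mp (hB (hmem u hu))).1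
      · -- violated, m = k - 3
        have hkeq : #C + 3 = Fintype.card A := by omega
        rcases hviol hb hkeq with ⟨u₀, hu₀, hLf, hFx⟩ | ⟨hall, hne3⟩
        · -- flex child exists
          obtain ⟨x, hx⟩ := exists_not_mem_finset ({0, c0, -c0} : Finset A)
            (by
              have h2 := card_insert_le (0:A) ({c0, -c0} : Finset A)
              have h3 := card_insert_le (c0:A) ({-c0} : Finset A)
              simp only [card_singleton] at *
              omega)
          simp only [mem_insert, mem_singleton, not_or] at hx
          obtain ⟨hx0, hxc0, hxnc0⟩ := hx
          have hxpool : x ∈ pool c0 := (mem_pool c0).mpr ⟨hx0, hxc0⟩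
          have hnx0 : (-x : A) ≠ 0 := by simpa using hx0
          have hnxc0 : (-x : A) ≠ c0 := by
            intro h; apply hxnc0; rw [← h]; abel
          have hnxx : (-x : A) ≠ x := my_neg_ne_self hodd hx0
          set B := pool c0 \ {x} with hBdef
          have hBcard : #B = #C := by
            rw [hBdef, card_sdiff_of_subset (by simpa using hxpool), card_pool c0 hc0, card_singleton]
            omega
          have hBsum : ∑ b ∈ B, b = -c0 - x := by
            rw [hBdef, sum_sdiff_eq_sub (by simpa using hxpool), sum_pool c0 hodd hc0,
              sum_singleton]
          have hnxB : -x ∈ B := by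
            rw [hBdef, mem_sdiff, mem_singleton]
            exact ⟨(mem_pool c0).mpr ⟨hnx0, hnxc0⟩, hnxx⟩
          obtain ⟨σ, hinj, hmem, hsum, hval, hother⟩ := build_sigma' C B hBcard.symm u₀ hu₀ (-x) hnxB
          have hW : c0 + ∑ u ∈ C, σ u = -x := by rw [hsum, hBsum]; abel
          refine ⟨σ, hinj, ?_, ?_, ?_, ?_⟩
          · intro u hu
            exact ((mem_pool c0).mp (sdiff_subset (hmem u hu))).2
          · intro u hu _
            exact ((mem_pool c0).mp (sdiff_subset (hmem u hu))).1
          · rw [hW, hb]; exact hnxc0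
          · intro u hu h
            rw [hW] at h
            by_cases he : u = u₀
            · rw [he]; exact ⟨hLf, hFx⟩
            · exact absurd h (hother u hu he)
        · -- all leaves, not elem-3
          push_neg at hne3
          obtain ⟨t0, ht0⟩ := exists_not_mem_finset
            ((univ.filter (fun a : A => a + a + a = 0)) ∪ {c0} ∪ univ.filter (fun a : A => a + a = -c0))
            (by
              have h1 := card_three_torsion_le' hodd (by intro h; rcases hne3 with ⟨a, ha⟩; exact ha (h a))
              have h2 := card_sol_le_one hodd (-c0 : A)
              have h3 := card_union_le ((univ.filter (fun a : A => a + a + a = 0)) ∪ {c0})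
                (univ.filter (fun a : A => a + a = -c0))
              have h4 := card_union_le (univ.filter (fun a : A => a + a + a = 0)) ({c0} : Finset A)
              simp only [card_singleton] at h4
              omega)
          simp only [mem_union, mem_filter, mem_univ, true_and, mem_singleton, not_or] at ht0
          obtain ⟨⟨ht3, htc0⟩, htsol⟩ := ht0
          have h2t : -t0 - t0 ≠ t0 := by
            intro h; apply ht3
            rw [← sub_eq_zero, show t0 + t0 + t0 - 0 = -((-t0 - t0) - t0) by abel, h, sub_self,
              neg_zero]
          have h2tc0 : -t0 - t0 ≠ c0 := by
            intro h; apply htsol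
            rw [← sub_eq_zero, show t0 + t0 - (-c0) = -((-t0 - t0) - c0) by abel, h, sub_self,
              neg_zero]
          have htc0' : t0 ≠ c0 := htc0
          set B := (univ : Finset A) \ {c0, t0, -t0 - t0} with hBdef
          have hcard3 : #({c0, t0, -t0 - t0} : Finset A) = 3 := by
            rw [card_insert_of_notMem (by simp [Ne.symm htc0', Ne.symm h2tc0]),
              card_pair (Ne.symm h2t)]
          have hBcard : #B = #C := by
            rw [hBdef, card_sdiff_of_subset (subset_univ _), card_univ, hcard3]
            omega
          have hBsum : ∑ b ∈ B, b = t0 - c0 := by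
            rw [hBdef, sum_sdiff_eq_sub (subset_univ _), sum_univ_eq_zero hodd,
              sum_insert (by simp [Ne.symm htc0', Ne.symm h2tc0]), sum_pair (Ne.symm h2t)]
            abel
          obtain ⟨σ, hinj, hmem, hsum⟩ := build_sigma C B hBcard.symm
          have hW : c0 + ∑ u ∈ C, σ u = t0 := by rw [hsum, hBsum]; abel
          have hmemB : ∀ u ∈ C, σ u ∈ B := hmem
          refine ⟨σ, hinj, ?_, ?_, ?_, ?_⟩
          · intro u hu
            have := hmemB u hu
            rw [hBdef, mem_sdiff] at this
            simp only [mem_insert, mem_singleton, not_or] at this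
            exact this.2.1
          · intro u hu hLf
            exact absurd (hall u hu) hLf
          · rw [hW, hb]; exact htc0'
          · intro u hu h
            rw [hW] at h
            have := hmemB u hu
            rw [hBdef, mem_sdiff] at this
            simp only [mem_insert, mem_singleton, not_or] at this
            exact absurd h this.2.2.1
    · -- normal case : b0 ≠ c0, use sum 0, W = c0
      obtain ⟨B, hB, hBcard, hBsum⟩ := Zlem c0 hodd h7 hc0 (#C) hm (by omega)
      obtain ⟨σ, hinj, hmem, hsum⟩ := build_sigma C B hBcard.symm
      have hW : c0 + ∑ u ∈ C, σ u = c0 := by rw [hsum, hBsum]; abel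
      refine ⟨σ, hinj, ?_, ?_, ?_, ?_⟩
      · intro u hu; exact ((mem_pool c0).mp (hB (hmem u hu))).2
      · intro u hu _; exact ((mem_pool c0).mp (hB (hmem u hu))).1
      · rw [hW]; exact Ne.symm hb
      · intro u hu h
        rw [hW] at h
        exact absurd h ((mem_pool c0).mp (hB (hmem u hu))).2

end Group


section Tree
variable {V : Type} [Fintype V] [DecidableEq V] (T : SimpleGraph V) [DecidableRel T.Adj] (r : V)

noncomputable def chl (v : V) : Finset V :=
  (T.neighborFinset v).filter (fun u => T.dist r u = T.dist r v + 1)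

noncomputable def desc (v : V) : Finset V :=
  univ.filter (fun x => T.dist r x = T.dist r v + T.dist v x)

lemma mem_chl {v u : V} : u ∈ chl T r v ↔ T.Adj v u ∧ T.dist r u = T.dist r v + 1 := by
  simp [chl]

lemma mem_desc {v x : V} : x ∈ desc T r v ↔ T.dist r x = T.dist r v + T.dist v x := by
  simp [desc]

lemma self_mem_desc (v : V) : v ∈ desc T r v := by
  simp [desc]

variable (hT : T.IsTree)
include hT

lemma path_length_eq {x y : V} (p : T.Walk x y) (hp : p.IsPath) :
    p.length = T.dist x y := by
  obtain ⟨q, hq⟩ := hT.isConnected.exists_walk_length_eq_dist x y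
  have hqp : q.IsPath := q.isPath_of_length_eq_dist hq
  obtain ⟨w, -, huniq⟩ := hT.existsUnique_path x y
  rw [huniq p hp, ← huniq q hqp]
  exact hq

lemma dist_pos_of_ne {x y : V} (h : x ≠ y) : 1 ≤ T.dist x y := by
  have := hT.isConnected.pos_dist_of_ne h
  omega

lemma dist_zero_iff {x y : V} : T.dist x y = 0 ↔ x = y := by
  constructor
  · intro h
    by_contra hne
    have := dist_pos_of_ne T hT hne
    omega
  · intro h; rw [h]; exact T.dist_self

lemma adj_dist {u v : V} (h : T.Adj u v) :
    T.dist r v = T.dist r u + 1 ∨ T.dist r u = T.dist r v + 1 := by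
  obtain ⟨p, hp⟩ := hT.isConnected.exists_walk_length_eq_dist r u
  have hpath : p.IsPath := p.isPath_of_length_eq_dist hp
  by_cases hv : v ∈ p.support
  · right
    have htake : T.dist r v ≤ (p.takeUntil v hv).length := T.dist_le _
    have hsplit : (p.takeUntil v hv).length + (p.dropUntil v hv).length = p.length := by
      rw [← SimpleGraph.Walk.length_append, SimpleGraph.Walk.take_spec]
    have hdrop : (p.dropUntil v hv).length ≠ 0 := by
      intro h0
      exact (T.ne_of_adj h).symm (SimpleGraph.Walk.eq_of_length_eq_zero h0)
    have htri : T.dist r u ≤ T.dist r v + 1 := by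
      have h1 : T.dist r u ≤ T.dist r v + T.dist v u := hT.isConnected.dist_triangle
      have h2 : T.dist v u = 1 := SimpleGraph.dist_eq_one_iff_adj.mpr h.symm
      omega
    omega
  · left
    have hconc : (p.concat h).IsPath := by
      have h1 : ((p.concat h).reverse).IsPath := by
        rw [SimpleGraph.Walk.reverse_concat]
        exact hpath.reverse.cons (by rw [SimpleGraph.Walk.support_reverse]; simpa using hv)
      simpa only [SimpleGraph.Walk.reverse_reverse] using h1.reverse
    have := path_length_eq T hT _ hconc
    rw [SimpleGraph.Walk.length_concat, hp] at this
    omega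

lemma exists_parent {v : V} (hv : v ≠ r) :
    ∃ u, T.Adj u v ∧ T.dist r u + 1 = T.dist r v := by
  obtain ⟨p, hp⟩ := hT.isConnected.exists_walk_length_eq_dist r v
  have hlen : p.length ≠ 0 := by
    rw [hp]
    intro h
    exact hv ((dist_zero_iff T hT).mp h).symm
  rcases q : p.reverse with _ | ⟨hadj, q'⟩
  · exfalso
    apply hlen
    have := congrArg SimpleGraph.Walk.length q
    rw [SimpleGraph.Walk.length_reverse] at this
    simpa using this
  · rename_i u
    refine ⟨u, hadj.symm, ?_⟩
    have hq' : q'.length = p.length - 1 := by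
      have := congrArg SimpleGraph.Walk.length q
      rw [SimpleGraph.Walk.length_reverse] at this
      simp only [SimpleGraph.Walk.length_cons] at this
      omega
    have h1 : T.dist r u ≤ p.length - 1 := by
      have := T.dist_le q'.reverse
      rw [SimpleGraph.Walk.length_reverse, hq'] at this
      exact this
    have h2 : T.dist r v ≤ T.dist r u + 1 := by
      have h1 : T.dist r v ≤ T.dist r u + T.dist u v := hT.isConnected.dist_triangle
      have h3 : T.dist u v = 1 := SimpleGraph.dist_eq_one_iff_adj.mpr hadj.symm
      omega
    rw [hp] at *
    omega


lemma parent_unique {v u u' : V} (h : T.Adj u v) (h' : T.Adj u' v)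
    (hd : T.dist r u + 1 = T.dist r v) (hd' : T.dist r u' + 1 = T.dist r v) : u = u' := by
  -- construct two paths r → v through u and u' resp.
  obtain ⟨p, hp⟩ := hT.isConnected.exists_walk_length_eq_dist r u
  have hppath : p.IsPath := p.isPath_of_length_eq_dist hp
  obtain ⟨p', hp'⟩ := hT.isConnected.exists_walk_length_eq_dist r u'
  have hppath' : p'.IsPath := p'.isPath_of_length_eq_dist hp'
  have hvp : v ∉ p.support := by
    intro hv
    have := T.dist_le (p.takeUntil v hv)
    have hsplit : (p.takeUntil v hv).length + (p.dropUntil v hv).length = p.length := by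
      rw [← SimpleGraph.Walk.length_append, SimpleGraph.Walk.take_spec]
    omega
  have hvp' : v ∉ p'.support := by
    intro hv
    have := T.dist_le (p'.takeUntil v hv)
    have hsplit : (p'.takeUntil v hv).length + (p'.dropUntil v hv).length = p'.length := by
      rw [← SimpleGraph.Walk.length_append, SimpleGraph.Walk.take_spec]
    omega
  have hc : (p.concat h).IsPath := by
    have h1 : ((p.concat h).reverse).IsPath := by
      rw [SimpleGraph.Walk.reverse_concat]
      exact hppath.reverse.cons (by rw [SimpleGraph.Walk.support_reverse]; simpa using hvp)
    simpa only [SimpleGraph.Walk.reverse_reverse] using h1.reverse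
  have hc' : (p'.concat h').IsPath := by
    have h1 : ((p'.concat h').reverse).IsPath := by
      rw [SimpleGraph.Walk.reverse_concat]
      exact hppath'.reverse.cons (by rw [SimpleGraph.Walk.support_reverse]; simpa using hvp')
    simpa only [SimpleGraph.Walk.reverse_reverse] using h1.reverse
  obtain ⟨w, -, huniq⟩ := hT.existsUnique_path r v
  have heq : p.concat h = p'.concat h' := by rw [huniq _ hc, huniq _ hc']
  -- u' is in the support of p.concat h
  have hu'mem : u' ∈ (p.concat h).support := by
    rw [heq, SimpleGraph.Walk.support_concat]
    exact List.mem_append.mpr (Or.inl (SimpleGraph.Walk.end_mem_support p'))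
  rw [SimpleGraph.Walk.support_concat, List.mem_append] at hu'mem
  rcases hu'mem with hmem | hmem
  · -- u' on p : take prefix
    have htake := path_length_eq T hT _ (hppath.takeUntil hmem)
    have hsplit : (p.takeUntil u' hmem).length + (p.dropUntil u' hmem).length = p.length := by
      rw [← SimpleGraph.Walk.length_append, SimpleGraph.Walk.take_spec]
    have hdz : (p.dropUntil u' hmem).length = 0 := by omega
    exact (SimpleGraph.Walk.eq_of_length_eq_zero hdz).symm
  · simp only [List.mem_singleton] at hmem
    exfalso
    subst hmem
    omega

lemma parent_step {w x : V} (hx : x ∈ desc T r w) (hne : x ≠ w) :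
    ∃ y, T.Adj y x ∧ T.dist r y + 1 = T.dist r x ∧ y ∈ desc T r w ∧
      T.dist w y + 1 = T.dist w x := by
  rw [mem_desc] at hx
  have hd1 : 1 ≤ T.dist w x := dist_pos_of_ne T hT (Ne.symm hne)
  obtain ⟨p, hp⟩ := hT.isConnected.exists_walk_length_eq_dist w x
  have hlen : p.length ≠ 0 := by omega
  rcases q : p.reverse with _ | ⟨hadj, q'⟩
  · exfalso
    apply hlen
    have := congrArg SimpleGraph.Walk.length q
    rw [SimpleGraph.Walk.length_reverse] at this
    simpa using this
  · rename_i z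
    have hq' : q'.length = p.length - 1 := by
      have := congrArg SimpleGraph.Walk.length q
      rw [SimpleGraph.Walk.length_reverse] at this
      simp only [SimpleGraph.Walk.length_cons] at this
      omega
    have hz1 : T.dist w z ≤ T.dist w x - 1 := by
      have := T.dist_le q'.reverse
      rw [SimpleGraph.Walk.length_reverse, hq', hp] at this
      exact this
    have hz2 : T.dist r z + 1 ≥ T.dist r x := by
      have h1 : T.dist r x ≤ T.dist r z + T.dist z x := hT.isConnected.dist_triangle
      have h3 : T.dist z x = 1 := SimpleGraph.dist_eq_one_iff_adj.mpr hadj.symm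
      omega
    have hz3 : T.dist r z ≤ T.dist r w + T.dist w z := hT.isConnected.dist_triangle
    have hz4 : T.dist r z + 1 = T.dist r x := by omega
    refine ⟨z, hadj.symm, hz4, ?_, by omega⟩
    rw [mem_desc]
    omega

lemma desc_trans_disjoint {v u u' : V} (hu : u ∈ chl T r v) (hu' : u' ∈ chl T r v) :
    ∀ n x, T.dist u x ≤ n → x ∈ desc T r u → x ∈ desc T r u' → u = u' := by
  intro n
  induction n with
  | zero =>
    intro x hn hx hx'
    have : u = x := (dist_zero_iff T hT).mp (by omega)
    subst this
    rw [mem_desc] at hx'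
    rw [mem_chl] at hu hu'
    have : T.dist u' u = 0 := by omega
    exact ((dist_zero_iff T hT).mp this).symm
  | succ n ih =>
    intro x hn hx hx'
    by_cases hxu : x = u
    · subst hxu
      rw [mem_desc] at hx'
      rw [mem_chl] at hu hu'
      have : T.dist u' x = 0 := by omega
      exact ((dist_zero_iff T hT).mp this).symm
    · have hxu' : x ≠ u' := by
        intro hh
        subst hh
        rw [mem_desc] at hx
        rw [mem_chl] at hu hu'
        have : T.dist u x = 0 := by omega
        exact hxu (((dist_zero_iff T hT).mp this).symm)
      obtain ⟨y, hadj, hdy, hydesc, hdwy⟩ := parent_step T r hT hx hxu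
      obtain ⟨y', hadj', hdy', hydesc', hdwy'⟩ := parent_step T r hT hx' hxu'
      have : y = y' := parent_unique T r hT hadj hadj' hdy hdy'
      subst this
      exact ih y (by omega) hydesc hydesc'

lemma desc_disjoint' {v u u' : V} (hu : u ∈ chl T r v) (hu' : u' ∈ chl T r v)
    {x : V} (hx : x ∈ desc T r u) (hx' : x ∈ desc T r u') : u = u' :=
  desc_trans_disjoint T r hT hu hu' (T.dist u x) x le_rfl hx hx'

lemma not_self_mem_desc_chl {v u : V} (hu : u ∈ chl T r v) : v ∉ desc T r u := by
  rw [mem_desc, mem_chl] at *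
  intro h
  have h1 : 1 ≤ T.dist u v := dist_pos_of_ne T hT (fun hh => T.ne_of_adj hu.1 hh.symm)
  omega

lemma desc_chl_subset {v u : V} (hu : u ∈ chl T r v) : desc T r u ⊆ desc T r v := by
  intro x hx
  rw [mem_desc] at *
  rw [mem_chl] at hu
  have h1 : T.dist r x ≤ T.dist r v + T.dist v x := hT.isConnected.dist_triangle
  have h2 : T.dist v x ≤ T.dist v u + T.dist u x := hT.isConnected.dist_triangle
  have h3 : T.dist v u = 1 := SimpleGraph.dist_eq_one_iff_adj.mpr hu.1
  omega

lemma chl_subset_desc {v u : V} (hu : u ∈ chl T r v) : u ∈ desc T r u :=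
  self_mem_desc T r u

lemma exists_chl_desc {v x : V} (hx : x ∈ desc T r v) (hne : x ≠ v) :
    ∃ u ∈ chl T r v, x ∈ desc T r u := by
  rw [mem_desc] at hx
  have hd1 : 1 ≤ T.dist v x := dist_pos_of_ne T hT (Ne.symm hne)
  obtain ⟨p, hp⟩ := hT.isConnected.exists_walk_length_eq_dist v x
  rcases q : p with _ | ⟨hadj, q'⟩
  · exfalso; rw [q] at hp; simp at hp; omega
  · rename_i u
    have hq' : q'.length = p.length - 1 := by
      rw [q]; simp
    have hu1 : T.dist u x ≤ T.dist v x - 1 := by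
      have := T.dist_le q'
      omega
    have hu2 : T.dist r u ≤ T.dist r v + 1 := by
      have h1 : T.dist r u ≤ T.dist r v + T.dist v u := hT.isConnected.dist_triangle
      have h3 : T.dist v u = 1 := SimpleGraph.dist_eq_one_iff_adj.mpr hadj
      omega
    have hu3 : T.dist r x ≤ T.dist r u + T.dist u x := hT.isConnected.dist_triangle
    have hu4 : T.dist r u = T.dist r v + 1 := by omega
    refine ⟨u, (mem_chl T r).mpr ⟨hadj, hu4⟩, ?_⟩
    rw [mem_desc]
    omega

lemma desc_closed_down {w x y : V} (hx : x ∈ desc T r w) (ha : T.Adj x y)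
    (hd : T.dist r y = T.dist r x + 1) : y ∈ desc T r w := by
  rw [mem_desc] at *
  have h1 : T.dist r y ≤ T.dist r w + T.dist w y := hT.isConnected.dist_triangle
  have h2 : T.dist w y ≤ T.dist w x + T.dist x y := hT.isConnected.dist_triangle
  have h3 : T.dist x y = 1 := SimpleGraph.dist_eq_one_iff_adj.mpr ha
  omega

lemma neighbors_in_desc {w x : V} (hx : x ∈ desc T r w) (hne : x ≠ w) {y : V}
    (ha : T.Adj x y) : y ∈ desc T r w := by
  rcases adj_dist T r hT ha with h | h
  · exact desc_closed_down T r hT hx ha h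
  · obtain ⟨z, hadj, hdz, hzdesc, -⟩ := parent_step T r hT hx hne
    have : y = z := parent_unique T r hT ha.symm hadj (by omega) hdz
    rw [this]
    exact hzdesc

lemma nbhd_eq {v p : V} (hp : T.Adj p v) (hd : T.dist r p + 1 = T.dist r v) :
    T.neighborFinset v = insert p (chl T r v) := by
  ext y
  simp only [mem_neighborFinset, mem_insert, mem_chl]
  constructor
  · intro h
    rcases adj_dist T r hT h with h1 | h1
    · right; exact ⟨h, h1⟩
    · left; exact parent_unique T r hT h.symm hp (by omega) hd
  · intro h
    rcases h with rfl | ⟨h, -⟩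
    · exact hp.symm
    · exact h

lemma degree_eq_chl {v : V} (hv : v ≠ r) :
    T.degree v = #(chl T r v) + 1 := by
  obtain ⟨p, hp, hd⟩ := exists_parent T r hT hv
  rw [← card_neighborFinset_eq_degree, nbhd_eq T r hT hp hd,
    card_insert_of_notMem (by rw [mem_chl]; rintro ⟨-, h⟩; omega)]

lemma chl_mem_ne_root {v u : V} (hu : u ∈ chl T r v) : u ≠ r := by
  rw [mem_chl] at hu
  intro h
  rw [h] at hu
  have : T.dist r r = 0 := T.dist_self
  omega

lemma desc_leaf {u : V} (hu : u ≠ r) (hdeg : T.degree u = 1) : desc T r u = {u} := by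
  ext x
  simp only [mem_singleton]
  constructor
  · intro hx
    by_contra hne
    obtain ⟨c, hc, -⟩ := exists_chl_desc T r hT hx hne
    have h1 : #(chl T r u) + 1 = 1 := by rw [← degree_eq_chl T r hT hu, hdeg]
    have : c ∈ (∅ : Finset V) := by
      rw [← Finset.card_eq_zero.mp (by omega : #(chl T r u) = 0)]
      exact hc
    simp at this
  · intro h; rw [h]; exact self_mem_desc T r u

lemma internal_of_desc_ne {u x : V} (hur : u ≠ r) (hx : x ∈ desc T r u)
    (hne : x ≠ u) : 2 ≤ T.degree u := by
  by_contra h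
  push_neg at h
  obtain ⟨p, hp, -⟩ := exists_parent T r hT hur
  have h1 : 1 ≤ T.degree u := by
    rw [← T.card_neighborFinset_eq_degree]
    exact Finset.card_pos.mpr ⟨p, by rw [mem_neighborFinset]; exact hp.symm⟩
  have hdeg1 : T.degree u = 1 := by omega
  have := desc_leaf T r hT hur hdeg1
  rw [this, mem_singleton] at hx
  exact hne hx

lemma desc_card_lt {v u : V} (hu : u ∈ chl T r v) :
    #(desc T r u) < #(desc T r v) := by
  apply Finset.card_lt_card
  rw [Finset.ssubset_iff_of_subset (desc_chl_subset T r hT hu)]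
  exact ⟨v, self_mem_desc T r v, not_self_mem_desc_chl T r hT hu⟩


lemma exists_leaf (hcard : 2 ≤ Fintype.card V) : ∃ x : V, T.degree x = 1 := by
  classical
  by_contra hno
  push_neg at hno
  have hmin : ∀ v : V, 1 ≤ T.degree v := by
    intro v
    rw [← T.card_neighborFinset_eq_degree]
    apply Finset.card_pos.mpr
    have : Nontrivial V := Fintype.one_lt_card_iff_nontrivial.mp (by omega)
    obtain ⟨w, hw⟩ := exists_ne v
    obtain ⟨p⟩ := hT.isConnected.preconnected v w
    rcases q : p with _ | ⟨hadj, q'⟩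
    · exact absurd rfl hw
    · rename_i z
      exact ⟨z, by rw [mem_neighborFinset]; exact hadj⟩
  have h2 : ∀ v : V, 2 ≤ T.degree v := by
    intro v
    have := hmin v
    have := hno v
    omega
  have hsum : 2 * Fintype.card V ≤ ∑ v : V, T.degree v := by
    calc 2 * Fintype.card V = ∑ _v : V, 2 := by rw [Finset.sum_const, card_univ]; ring
    _ ≤ ∑ v : V, T.degree v := Finset.sum_le_sum (fun v _ => h2 v)
  rw [T.sum_degrees_eq_twice_card_edges] at hsum
  have he := hT.card_edgeFinset
  omega

variable (hroot : T.degree r = 1)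
include hroot

lemma root_nbhd : ∃ v0, T.neighborFinset r = {v0} := by
  rw [← T.card_neighborFinset_eq_degree] at hroot
  exact Finset.card_eq_one.mp hroot

lemma all_mem_desc (v0 : V) (h0 : T.neighborFinset r = {v0}) :
    ∀ x : V, x ≠ r → x ∈ desc T r v0 := by
  have hadj : T.Adj r v0 := by rw [← mem_neighborFinset, h0]; exact mem_singleton_self v0
  have hd0 : T.dist r v0 = 1 := SimpleGraph.dist_eq_one_iff_adj.mpr hadj
  have : ∀ n, ∀ x : V, T.dist r x ≤ n → x ≠ r → x ∈ desc T r v0 := by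
    intro n
    induction n with
    | zero =>
      intro x hn hx
      exact absurd ((dist_zero_iff T hT).mp (by omega)).symm hx
    | succ n ih =>
      intro x hn hx
      by_cases h1 : T.dist r x = 1
      · have : T.Adj r x := SimpleGraph.dist_eq_one_iff_adj.mp h1
        have : x ∈ T.neighborFinset r := by rw [mem_neighborFinset]; exact this
        rw [h0, mem_singleton] at this
        rw [this]
        exact self_mem_desc T r v0
      · obtain ⟨y, hyadj, hyd⟩ := exists_parent T r hT hx
        have hy1 : 1 ≤ T.dist r x := dist_pos_of_ne T hT (Ne.symm hx)
        have hyr : y ≠ r := by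
          intro h
          rw [h] at hyd
          have : T.dist r r = 0 := T.dist_self
          omega
        have hymem : y ∈ desc T r v0 := ih y (by omega) hyr
        exact desc_closed_down T r hT hymem hyadj (by omega)
  intro x hx
  exact this (T.dist r x) x le_rfl hx

lemma v0_deg (hcard : 3 ≤ Fintype.card V) (v0 : V) (h0 : T.neighborFinset r = {v0}) :
    2 ≤ T.degree v0 := by
  have hadj : T.Adj r v0 := by rw [← mem_neighborFinset, h0]; exact mem_singleton_self v0
  have hv0r : v0 ≠ r := fun h => T.loopless.irrefl r (h ▸ hadj)
  by_contra hlt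
  push_neg at hlt
  -- v0 has degree 1, so desc v0 = {v0}, but all of V \ {r} is in desc v0
  have hdeg1 : T.degree v0 = 1 := by
    have : 1 ≤ T.degree v0 := by
      rw [← T.card_neighborFinset_eq_degree]
      exact Finset.card_pos.mpr ⟨r, by rw [mem_neighborFinset]; exact hadj.symm⟩
    omega
  have hdesc := desc_leaf T r hT hv0r hdeg1
  have hsub : (univ : Finset V) ⊆ insert r {v0} := by
    intro x _
    by_cases hx : x = r
    · rw [hx]; exact mem_insert_self _ _
    · have := all_mem_desc T r hT hroot v0 h0 x hx
      rw [hdesc, mem_singleton] at this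
      rw [this]
      exact mem_insert_of_mem (mem_singleton_self _)
  have := Finset.card_le_card hsub
  have hle : #(insert r ({v0} : Finset V)) ≤ 2 := card_insert_le _ _ |>.trans (by simp)
  rw [card_univ] at this
  omega

end Tree

section Glue
variable {V : Type} [Fintype V] [DecidableEq V] (T : SimpleGraph V) [DecidableRel T.Adj] (r : V)
variable {A : Type} [AddCommGroup A]

def wtS (g : Sym2 V → A) (x : V) : A := ∑ y ∈ T.neighborFinset x, g s(x,y)

def BadV (k : ℕ) (v : V) : Prop :=
  ∀ x ∈ desc T r v, T.degree x ≠ 1 → T.degree x = k - 2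

noncomputable def glue (v : V) (σ : V → A) (gs : V → Sym2 V → A)
    (huniq : ∀ u u' x, u ∈ chl T r v → u' ∈ chl T r v → x ∈ desc T r u →
      x ∈ desc T r u' → u = u') :
    Sym2 V → A :=
  Sym2.lift ⟨fun x y =>
    if x = v then σ y
    else if y = v then σ x
    else if h : ∃ u, u ∈ chl T r v ∧ x ∈ desc T r u ∧ y ∈ desc T r u then
      gs h.choose s(x,y) else 0,
   by
    intro x y
    by_cases hx : x = v <;> by_cases hy : y = v
    · subst hx; subst hy; simp
    · subst hx; simp [hy]
    · subst hy; simp [hx]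
    · simp only [if_neg hx, if_neg hy]
      by_cases h : ∃ u, u ∈ chl T r v ∧ x ∈ desc T r u ∧ y ∈ desc T r u
      · have h' : ∃ u, u ∈ chl T r v ∧ y ∈ desc T r u ∧ x ∈ desc T r u := by
          obtain ⟨u, h1, h2, h3⟩ := h; exact ⟨u, h1, h3, h2⟩
        rw [dif_pos h, dif_pos h']
        have e1 := h.choose_spec
        have e2 := h'.choose_spec
        have heq : h.choose = h'.choose := huniq _ _ x e1.1 e2.1 e1.2.1 e2.2.2
        rw [heq, Sym2.eq_swap]
      · have h' : ¬ ∃ u, u ∈ chl T r v ∧ y ∈ desc T r u ∧ x ∈ desc T r u := by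
          intro hc; obtain ⟨u, h1, h2, h3⟩ := hc; exact h ⟨u, h1, h3, h2⟩
        rw [dif_neg h, dif_neg h']⟩

lemma glue_left (v : V) (σ : V → A) (gs : V → Sym2 V → A) (huniq) (u : V) :
    glue T r v σ gs huniq s(v,u) = σ u := by
  rw [glue, Sym2.lift_mk]
  simp

lemma glue_desc (v : V) (σ : V → A) (gs : V → Sym2 V → A) (huniq) {u x y : V}
    (hu : u ∈ chl T r v) (hx : x ∈ desc T r u) (hy : y ∈ desc T r u)
    (hxv : x ≠ v) (hyv : y ≠ v) :
    glue T r v σ gs huniq s(x,y) = gs u s(x,y) := by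
  rw [glue, Sym2.lift_mk]
  dsimp only
  rw [if_neg hxv, if_neg hyv]
  have h : ∃ w, w ∈ chl T r v ∧ x ∈ desc T r w ∧ y ∈ desc T r w := ⟨u, hu, hx, hy⟩
  rw [dif_pos h]
  have spec := h.choose_spec
  have heq : h.choose = u := huniq _ _ x spec.1 hu spec.2.1 hx
  rw [heq]

end Glue


section Step
variable {V : Type} [Fintype V] [DecidableEq V] (T : SimpleGraph V) [DecidableRel T.Adj] (r : V)
variable {A : Type} [AddCommGroup A] [Fintype A] [DecidableEq A]

lemma step (hT : T.IsTree) (hroot : T.degree r = 1)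
    (hodd : Odd (Fintype.card A)) (h7 : 7 ≤ Fintype.card A)
    (hmax : T.maxDegree + 2 ≤ Fintype.card A) :
    ∀ n (v : V), #(desc T r v) ≤ n → v ≠ r → 2 ≤ T.degree v → ∀ c0 b0 : A, c0 ≠ 0 →
    (b0 = c0 → ¬((∀ a : A, a + a + a = 0) ∧ BadV T r (Fintype.card A) v)) →
    ∃ g : Sym2 V → A,
      (∀ u ∈ chl T r v, g s(v,u) ≠ c0) ∧
      (∀ u ∈ chl T r v, ∀ u' ∈ chl T r v, u ≠ u' → g s(v,u) ≠ g s(v,u')) ∧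
      (c0 + ∑ u ∈ chl T r v, g s(v,u) ≠ b0) ∧
      (∀ u ∈ chl T r v, wtS T g u ≠ c0 + ∑ w ∈ chl T r v, g s(v,w)) ∧
      (∀ x ∈ desc T r v, x ≠ v → ∀ y, T.Adj x y → y ≠ v → wtS T g x ≠ wtS T g y) ∧
      (∀ x ∈ desc T r v, x ≠ v → ∀ y z, T.Adj x y → T.Adj x z → y ≠ z →
        g s(x,y) ≠ g s(x,z)) := by
  intro n
  induction n with
  | zero =>
    intro v hcard
    exact absurd (Finset.card_pos.mpr ⟨v, self_mem_desc T r v⟩) (by omega)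
  | succ n ih =>
    intro v hcard hvr hdeg c0 b0 hc0 hviol
    have hdegchl : T.degree v = #(chl T r v) + 1 := degree_eq_chl T r hT hvr
    set m := #(chl T r v) with hm
    have hm1 : 1 ≤ m := by omega
    have hm2 : m + 3 ≤ Fintype.card A := by
      have := T.degree_le_maxDegree v
      omega
    -- the selection
    have hviol' : b0 = c0 → m + 3 = Fintype.card A →
        (∃ u ∈ chl T r v, ¬(T.degree u = 1) ∧
          (¬((∀ a : A, a + a + a = 0) ∧ BadV T r (Fintype.card A) u))) ∨
        ((∀ u ∈ chl T r v, T.degree u = 1) ∧ ¬∀ a : A, a + a + a = 0) := by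
      intro hb hk
      by_cases h3 : ∀ a : A, a + a + a = 0
      · left
        have hnb : ¬ BadV T r (Fintype.card A) v := fun hb' => hviol hb ⟨h3, hb'⟩
        rw [BadV] at hnb
        push_neg at hnb
        obtain ⟨x, hxdesc, hxdeg1, hxdegk⟩ := hnb
        have hxv : x ≠ v := by
          intro h
          rw [h] at hxdegk
          omega
        obtain ⟨u, hu, hxu⟩ := exists_chl_desc T r hT hxdesc hxv
        have hur : u ≠ r := chl_mem_ne_root T r hT hu
        have hudeg : T.degree u ≠ 1 := by
          intro h1
          have := desc_leaf T r hT hur h1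
          rw [this, mem_singleton] at hxu
          exact hxdeg1 (by rw [hxu]; exact h1)
        refine ⟨u, hu, hudeg, ?_⟩
        rintro ⟨-, hbadu⟩
        exact hxdegk (hbadu x hxu hxdeg1)
      · by_cases hex : ∃ u ∈ chl T r v, T.degree u ≠ 1
        · left
          obtain ⟨u, hu, hudeg⟩ := hex
          exact ⟨u, hu, hudeg, fun h => h3 h.1⟩
        · right
          push_neg at hex
          exact ⟨hex, h3⟩
    obtain ⟨σ, hinj, hσc0, hσ0, hσW, hσFx⟩ := sel hodd h7 (chl T r v)
      (fun u => T.degree u = 1)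
      (fun u => ¬((∀ a : A, a + a + a = 0) ∧ BadV T r (Fintype.card A) u))
      c0 b0 hc0 hm1 hm2 hviol'
    set W := c0 + ∑ u ∈ chl T r v, σ u with hWdef
    -- apply the inductive hypothesis to internal children
    have H : ∀ u, u ∈ chl T r v → 2 ≤ T.degree u →
        ∃ g' : Sym2 V → A,
          (∀ w ∈ chl T r u, g' s(u,w) ≠ σ u) ∧
          (∀ w ∈ chl T r u, ∀ w' ∈ chl T r u, w ≠ w' → g' s(u,w) ≠ g' s(u,w')) ∧
          (σ u + ∑ w ∈ chl T r u, g' s(u,w) ≠ W) ∧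
          (∀ w ∈ chl T r u, wtS T g' w ≠ σ u + ∑ w' ∈ chl T r u, g' s(u,w')) ∧
          (∀ x ∈ desc T r u, x ≠ u → ∀ y, T.Adj x y → y ≠ u → wtS T g' x ≠ wtS T g' y) ∧
          (∀ x ∈ desc T r u, x ≠ u → ∀ y z, T.Adj x y → T.Adj x z → y ≠ z →
            g' s(x,y) ≠ g' s(x,z)) := by
      intro u hu hudeg
      have hcard' : #(desc T r u) ≤ n := by
        have := desc_card_lt T r hT hu
        omega
      exact ih u hcard' (chl_mem_ne_root T r hT hu) hudeg (σ u) W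
        (hσ0 u hu (by omega))
        (fun hWu => (hσFx u hu hWu.symm).2)
    choose! gs hgs1 hgs2 hgs3 hgs4 hgs5 hgs6 using H
    have huniq : ∀ u u' x, u ∈ chl T r v → u' ∈ chl T r v → x ∈ desc T r u →
        x ∈ desc T r u' → u = u' := fun u u' x hu hu' hx hx' =>
      desc_disjoint' T r hT hu hu' hx hx'
    set g := glue T r v σ gs huniq with hgdef
    have hgv : ∀ u : V, g s(v,u) = σ u := fun u => glue_left T r v σ gs huniq u
    have hvnd : ∀ u ∈ chl T r v, v ∉ desc T r u := fun u hu =>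
      not_self_mem_desc_chl T r hT hu
    have hgsub : ∀ u, u ∈ chl T r v → ∀ x y, x ∈ desc T r u → y ∈ desc T r u →
        g s(x,y) = gs u s(x,y) := by
      intro u hu x y hx hy
      exact glue_desc T r v σ gs huniq hu hx hy
        (fun h => hvnd u hu (h ▸ hx)) (fun h => hvnd u hu (h ▸ hy))
    have hsum : ∑ u ∈ chl T r v, g s(v,u) = ∑ u ∈ chl T r v, σ u :=
      Finset.sum_congr rfl (fun u _ => hgv u)
    have hchl_desc : ∀ u ∈ chl T r v, ∀ w ∈ chl T r u, w ∈ desc T r u := by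
      intro u hu w hw
      exact desc_chl_subset T r hT hw (self_mem_desc T r w)
    -- neighborhood structure of children
    have hnbhd_int : ∀ u ∈ chl T r v, 2 ≤ T.degree u →
        T.neighborFinset u = insert v (chl T r u) := by
      intro u hu hdu
      rw [mem_chl] at hu
      exact nbhd_eq T r hT hu.1 (by omega)
    have hv_not_chl : ∀ u ∈ chl T r v, v ∉ chl T r u := by
      intro u hu hmem
      rw [mem_chl] at hu hmem
      omega
    have hwt_int : ∀ u ∈ chl T r v, 2 ≤ T.degree u →
        wtS T g u = σ u + ∑ w ∈ chl T r u, gs u s(u,w) := by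
      intro u hu hdu
      rw [wtS, hnbhd_int u hu hdu, Finset.sum_insert (hv_not_chl u hu)]
      congr 1
      · rw [Sym2.eq_swap]; exact hgv u
      · apply Finset.sum_congr rfl
        intro w hw
        exact hgsub u hu u w (self_mem_desc T r u) (hchl_desc u hu w hw)
    have hwt_leaf : ∀ u ∈ chl T r v, T.degree u = 1 → wtS T g u = σ u := by
      intro u hu hdu
      have hadj : T.Adj v u := ((mem_chl T r).mp hu).1
      have hN : T.neighborFinset u = {v} := by
        apply Finset.eq_singleton_iff_unique_mem.mpr
        constructor
        · rw [mem_neighborFinset]; exact hadj.symm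
        · intro y hy
          have h1 : #(T.neighborFinset u) = 1 := by
            rw [T.card_neighborFinset_eq_degree]; exact hdu
          obtain ⟨z, hz⟩ := Finset.card_eq_one.mp h1
          rw [hz, mem_singleton] at hy
          have : v ∈ ({z} : Finset V) := by rw [← hz, mem_neighborFinset]; exact hadj.symm
          rw [mem_singleton] at this
          rw [hy, ← this]
      rw [wtS, hN, Finset.sum_singleton, Sym2.eq_swap]
      exact hgv u
    have hwt_deep : ∀ u, u ∈ chl T r v → ∀ x ∈ desc T r u, x ≠ u →
        wtS T g x = wtS T (gs u) x := by
      intro u hu x hx hxu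
      rw [wtS, wtS]
      apply Finset.sum_congr rfl
      intro y hy
      rw [mem_neighborFinset] at hy
      exact hgsub u hu x y hx (neighbors_in_desc T r hT hx hxu hy)
    -- the child's own weight matches the IH expression
    refine ⟨g, ?_, ?_, ?_, ?_, ?_, ?_⟩
    · intro u hu
      rw [hgv u]
      exact hσc0 u hu
    · intro u hu u' hu' hne
      rw [hgv u, hgv u']
      intro h
      exact hne (hinj hu hu' h)
    · rw [hsum]
      exact hσW
    · intro u hu
      rw [hsum]
      rcases Nat.lt_or_ge (T.degree u) 2 with hdu | hdu
      · have hdu1 : T.degree u = 1 := by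
          have h1 : 1 ≤ T.degree u := by
            rw [← T.card_neighborFinset_eq_degree]
            apply Finset.card_pos.mpr
            exact ⟨v, by rw [mem_neighborFinset]; exact ((mem_chl T r).mp hu).1.symm⟩
          omega
        rw [hwt_leaf u hu hdu1]
        intro h
        exact (hσFx u hu h).1 hdu1
      · rw [hwt_int u hu hdu]
        exact hgs3 u hu hdu
    · -- weight condition inside the subtree
      intro x hx hxv y hadj hyv
      obtain ⟨u, hu, hxu⟩ := exists_chl_desc T r hT hx hxv
      by_cases hxu' : x = u
      · subst hxu'
        rcases Nat.lt_or_ge (T.degree x) 2 with hdu | hdu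
        · exfalso
          have hdu1 : T.degree x = 1 := by
            have h1 : 1 ≤ T.degree x := by
              rw [← T.card_neighborFinset_eq_degree]
              exact Finset.card_pos.mpr ⟨y, by rw [mem_neighborFinset]; exact hadj⟩
            omega
          have hN := hwt_leaf x hu hdu1
          -- y ∈ N(x) = {v}, contradiction with y ≠ v
          have hadjv : T.Adj v x := ((mem_chl T r).mp hu).1
          have h1 : #(T.neighborFinset x) = 1 := by
            rw [T.card_neighborFinset_eq_degree]; exact hdu1
          obtain ⟨z, hz⟩ := Finset.card_eq_one.mp h1
          have hyz : y ∈ ({z} : Finset V) := by rw [← hz, mem_neighborFinset]; exact hadj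
          have hvz : v ∈ ({z} : Finset V) := by rw [← hz, mem_neighborFinset]; exact hadjv.symm
          rw [mem_singleton] at hyz hvz
          exact hyv (by rw [hyz, hvz])
        · -- x = u internal, y ∈ chl u
          have hyu : y ∈ chl T r x := by
            have : y ∈ T.neighborFinset x := by rw [mem_neighborFinset]; exact hadj
            rw [hnbhd_int x hu hdu, mem_insert] at this
            rcases this with h | h
            · exact absurd h hyv
            · exact h
          rw [hwt_int x hu hdu, hwt_deep x hu y (hchl_desc x hu y hyu)
            (fun h => (T.ne_of_adj hadj) h.symm)]
          exact (hgs4 x hu hdu y hyu).symm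
      · have hyu : y ∈ desc T r u := neighbors_in_desc T r hT hxu hxu' hadj
        by_cases hyu' : y = u
        · subst hyu'
          have hdu : 2 ≤ T.degree y :=
            internal_of_desc_ne T r hT (chl_mem_ne_root T r hT hu) hxu hxu'
          have hxchl : x ∈ chl T r y := by
            have hN : x ∈ T.neighborFinset y := by
              rw [mem_neighborFinset]; exact hadj.symm
            rw [hnbhd_int y hu hdu, mem_insert] at hN
            rcases hN with h | h
            · exact absurd h hxv
            · exact h
          rw [hwt_int y hu hdu, hwt_deep y hu x hxu hxu']
          exact hgs4 y hu hdu x hxchl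
        · have hdu : 2 ≤ T.degree u :=
            internal_of_desc_ne T r hT (chl_mem_ne_root T r hT hu) hxu hxu'
          rw [hwt_deep u hu x hxu hxu', hwt_deep u hu y hyu hyu']
          exact hgs5 u hu hdu x hxu hxu' y hadj hyu'
    · -- properness inside the subtree
      intro x hx hxv y z hay haz hyz
      obtain ⟨u, hu, hxu⟩ := exists_chl_desc T r hT hx hxv
      by_cases hxu' : x = u
      · subst hxu'
        rcases Nat.lt_or_ge (T.degree x) 2 with hdu | hdu
        · exfalso
          have h1 : #(T.neighborFinset x) ≤ 1 := by
            rw [T.card_neighborFinset_eq_degree]; omega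
          have hmem2 : ({y, z} : Finset V) ⊆ T.neighborFinset x := by
            intro w hw
            rw [mem_insert, mem_singleton] at hw
            rcases hw with rfl | rfl
            · rw [mem_neighborFinset]; exact hay
            · rw [mem_neighborFinset]; exact haz
          have := Finset.card_le_card hmem2
          rw [card_pair hyz] at this
          omega
        · have hycase : y ∈ T.neighborFinset x := by rw [mem_neighborFinset]; exact hay
          have hzcase : z ∈ T.neighborFinset x := by rw [mem_neighborFinset]; exact haz
          rw [hnbhd_int x hu hdu, mem_insert] at hycase hzcase
          rcases hycase with hyv | hychl <;> rcases hzcase with hzv | hzchl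
          · exact absurd (hyv.trans hzv.symm) hyz
          · subst hyv
            rw [Sym2.eq_swap, hgv x,
              hgsub x hu x z (self_mem_desc T r x) (hchl_desc x hu z hzchl)]
            exact fun h => (hgs1 x hu hdu z hzchl) h.symm
          · subst hzv
            rw [(by rw [Sym2.eq_swap] : s(x,z) = s(z,x)), hgv x,
              hgsub x hu x y (self_mem_desc T r x) (hchl_desc x hu y hychl)]
            exact hgs1 x hu hdu y hychl
          · rw [hgsub x hu x y (self_mem_desc T r x) (hchl_desc x hu y hychl),
              hgsub x hu x z (self_mem_desc T r x) (hchl_desc x hu z hzchl)]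
            exact hgs2 x hu hdu y hychl z hzchl hyz
      · have hdu : 2 ≤ T.degree u :=
          internal_of_desc_ne T r hT (chl_mem_ne_root T r hT hu) hxu hxu'
        have hyu : y ∈ desc T r u := neighbors_in_desc T r hT hxu hxu' hay
        have hzu : z ∈ desc T r u := neighbors_in_desc T r hT hxu hxu' haz
        rw [hgsub u hu x y hxu hyu, hgsub u hu x z hxu hzu]
        exact hgs6 u hu hdu x hxu hxu' y z hay haz hyz

end Step

end TwinAux


/-- Let `T` be a tree of order at least `3` with maximum degree `t` and let `𝒢` be an
Abelian group of odd order `k ≥ max {7, t + 2}`.  Then there exists a `𝒢`-twin edge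
coloring of `T`, unless `T` is a `(3^p - 2)`-regular tree and `𝒢 ≅ (ℤ₃)^p` for some
integer `p`. -/
theorem tree_twin_coloring_of_odd_order {V : Type} [Fintype V] (T : SimpleGraph V)
    [DecidableRel T.Adj] (hT : T.IsTree) (hcard : 3 ≤ Fintype.card V)
    (A : Type) [AddCommGroup A] [Fintype A] (hodd : Odd (Fintype.card A))
    (h7 : 7 ≤ Fintype.card A) (ht : T.maxDegree + 2 ≤ Fintype.card A)
    (hexc : ¬ ∃ p : ℕ, IsRegularTreeDeg T (3 ^ p - 2) ∧ Nonempty (A ≃+ (Fin p → ZMod 3))) :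
    ∃ f : Sym2 V → A, IsTwinEdgeColoring T f := by
  classical
  open TwinAux in
  obtain ⟨r, hroot⟩ := exists_leaf T hT (by omega)
  obtain ⟨v0, h0⟩ := root_nbhd T r hT hroot
  have hadj : T.Adj r v0 := by
    rw [← SimpleGraph.mem_neighborFinset, h0]; exact Finset.mem_singleton_self v0
  have hv0r : v0 ≠ r := fun h => T.loopless.irrefl r (h ▸ hadj)
  have hdeg2 : 2 ≤ T.degree v0 := v0_deg T r hT hroot hcard v0 h0
  have hd0 : T.dist r v0 = 1 := SimpleGraph.dist_eq_one_iff_adj.mpr hadj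
  -- pick a nonzero color
  have : Nontrivial A := Fintype.one_lt_card_iff_nontrivial.mp (by omega)
  obtain ⟨c0, hc0⟩ := exists_ne (0 : A)
  -- the non-exceptional hypothesis
  have hviol : (c0 : A) = c0 → ¬((∀ a : A, a + a + a = 0) ∧
      BadV T r (Fintype.card A) v0) := by
    rintro - ⟨h3, hbad⟩
    obtain ⟨p, hcardp, ⟨iso⟩⟩ := elem3_struct (A := A) h3
    apply hexc
    refine ⟨p, ?_, ⟨iso⟩⟩
    intro x hx
    have hxr : x ≠ r := fun h => hx (h ▸ hroot)
    have hxdesc := all_mem_desc T r hT hroot v0 h0 x hxr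
    have := hbad x hxdesc hx
    rw [hcardp] at this
    exact this
  obtain ⟨g, hg1, hg2, hg3, hg4, hg5, hg6⟩ := step T r hT hroot hodd h7 ht
    (#(desc T r v0)) v0 le_rfl hv0r hdeg2 c0 c0 hc0 hviol
  set W := c0 + ∑ u ∈ chl T r v0, g s(v0, u) with hW
  -- the coloring
  set f : Sym2 V → A := fun e => if e = s(r, v0) then c0 else g e with hf
  have hfrv : f s(r, v0) = c0 := by rw [hf]; simp
  have hfvr : f s(v0, r) = c0 := by rw [Sym2.eq_swap]; exact hfrv
  have hchl_ne_r : ∀ u ∈ chl T r v0, u ≠ r := fun u hu => chl_mem_ne_root T r hT hu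
  have hedge_ne : ∀ u ∈ chl T r v0, s(v0, u) ≠ s(r, v0) := by
    intro u hu h
    rw [Sym2.eq_iff] at h
    rcases h with ⟨h1, -⟩ | ⟨-, h2⟩
    · exact hv0r h1
    · exact hchl_ne_r u hu h2
  have hfchl : ∀ u ∈ chl T r v0, f s(v0, u) = g s(v0, u) := by
    intro u hu
    rw [hf]
    simp only [if_neg (hedge_ne u hu)]
  -- membership of all other vertices in desc v0
  have hdesc_all : ∀ x : V, x ≠ r → x ∈ desc T r v0 :=
    all_mem_desc T r hT hroot v0 h0
  -- edges not incident to r, v0 are unchanged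
  have hedge_ne' : ∀ x y : V, x ≠ r → x ≠ v0 → s(x, y) ≠ s(r, v0) := by
    intro x y hxr hxv0 h
    rw [Sym2.eq_iff] at h
    rcases h with ⟨h1, -⟩ | ⟨h1, -⟩
    · exact hxr h1
    · exact hxv0 h1
  -- r's only neighbor is v0
  have hnr : ∀ y : V, T.Adj r y → y = v0 := by
    intro y hy
    have : y ∈ T.neighborFinset r := by rw [SimpleGraph.mem_neighborFinset]; exact hy
    rw [h0, Finset.mem_singleton] at this
    exact this
  have hnr' : ∀ x : V, x ≠ v0 → ¬ T.Adj x r := fun x hx h => hx (hnr x h.symm)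
  -- weights under f
  have hwt_conv : ∀ u : V, (∑ x ∈ T.neighborFinset u, f s(x, u)) = wtS T f u := by
    intro u
    rw [wtS]
    apply Finset.sum_congr rfl
    intro x _
    rw [Sym2.eq_swap]
  have hwt_f_deep : ∀ x : V, x ≠ r → x ≠ v0 → wtS T f x = wtS T g x := by
    intro x hxr hxv0
    rw [wtS, wtS]
    apply Finset.sum_congr rfl
    intro y _
    rw [hf]
    simp only [if_neg (hedge_ne' x y hxr hxv0)]
  have hNv0 : T.neighborFinset v0 = insert r (chl T r v0) := by
    apply nbhd_eq T r hT hadj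
    rw [T.dist_self, hd0]
  have hr_not_chl : r ∉ chl T r v0 := by
    rw [mem_chl]
    rintro ⟨-, h⟩
    rw [T.dist_self] at h
    omega
  have hwt_v0 : wtS T f v0 = W := by
    rw [wtS, hNv0, Finset.sum_insert hr_not_chl, hW, hfvr]
    congr 1
    apply Finset.sum_congr rfl
    intro u hu
    exact hfchl u hu
  have hwt_r : wtS T f r = c0 := by
    rw [wtS, h0, Finset.sum_singleton, hfrv]
  have hwt_chl : ∀ u ∈ chl T r v0, wtS T f u = wtS T g u := by
    intro u hu
    apply hwt_f_deep u (hchl_ne_r u hu)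
    intro h
    rw [mem_chl, h] at hu
    omega
  refine ⟨f, ?_, ?_⟩
  · -- properness
    intro u y z hay haz hyz
    by_cases hur : u = r
    · rw [hur] at hay haz
      exact absurd ((hnr y hay).trans (hnr z haz).symm) hyz
    by_cases huv0 : u = v0
    · rw [huv0] at hay haz ⊢
      have hy : y ∈ insert r (chl T r v0) := by rw [← hNv0, SimpleGraph.mem_neighborFinset]; exact hay
      have hz : z ∈ insert r (chl T r v0) := by rw [← hNv0, SimpleGraph.mem_neighborFinset]; exact haz
      rw [Finset.mem_insert] at hy hz
      rcases hy with rfl | hy <;> rcases hz with rfl | hz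
      · exact absurd rfl hyz
      · rw [hfvr, hfchl z hz]
        exact fun h => hg1 z hz h.symm
      · rw [hfvr, hfchl y hy]
        exact hg1 y hy
      · rw [hfchl y hy, hfchl z hz]
        exact hg2 y hy z hz hyz
    · -- deep vertex
      have hmem := hdesc_all u hur
      have hedgey : s(u, y) ≠ s(r, v0) := hedge_ne' u y hur huv0
      have hedgez : s(u, z) ≠ s(r, v0) := hedge_ne' u z hur huv0
      rw [hf]
      simp only [if_neg hedgey, if_neg hedgez]
      exact hg6 u hmem huv0 y z hay haz hyz
  · -- weights
    intro u v huv
    rw [hwt_conv, hwt_conv]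
    by_cases hur : u = r
    · rw [hur] at huv ⊢
      have hveq : v = v0 := hnr v huv
      rw [hveq, hwt_r, hwt_v0]
      exact Ne.symm hg3
    by_cases hvr : v = r
    · rw [hvr] at huv ⊢
      have hueq : u = v0 := hnr u huv.symm
      rw [hueq, hwt_r, hwt_v0]
      exact hg3
    by_cases huv0 : u = v0
    · rw [huv0] at huv ⊢
      have hv : v ∈ chl T r v0 := by
        have : v ∈ insert r (chl T r v0) := by
          rw [← hNv0, SimpleGraph.mem_neighborFinset]; exact huv
        rw [Finset.mem_insert] at this
        rcases this with h | h
        · exact absurd h hvr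
        · exact h
      rw [hwt_v0, hwt_chl v hv]
      exact (hg4 v hv).symm
    by_cases hvv0 : v = v0
    · rw [hvv0] at huv ⊢
      have hu : u ∈ chl T r v0 := by
        have : u ∈ insert r (chl T r v0) := by
          rw [← hNv0, SimpleGraph.mem_neighborFinset]; exact huv.symm
        rw [Finset.mem_insert] at this
        rcases this with h | h
        · exact absurd h hur
        · exact h
      rw [hwt_v0, hwt_chl u hu]
      exact hg4 u hu
    · rw [hwt_f_deep u hur huv0, hwt_f_deep v hvr hvv0]
      exact hg5 u (hdesc_all u hur) huv0 v huv hvv0
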